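/- The operator D is self-adjoint with respect to the counting measure on I and positive semidefinite, and there is a universal constant C such that every function φ : I → ℝ satisfies (Σ_{x∈I} φ_x²)^{1/2} ≤ C·[ N^{−1/2}·Σ_{x∈I}|φ_x| + (Σ_{x∈I}|(D^{1/2}φ)_x|²)^{1/6}·(Σ_{x∈I}|φ_x|)^{2/3} ], where D^{1/2} denotes the positive semidefinite square root of D (note Σ_{x∈I}|(D^{1/2}φ)_x|² equals the quadratic form ⟨φ, Dφ⟩). -/

import Mathlib

open scoped BigOperators

/-- The nearest-neighbor negative Laplacian with Neumann boundary conditions on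
`I = {0,…,N}`, acting on `ℤ`-indexed functions. -/
noncomputable def Dact (N : ℕ) (φ : ℤ → ℝ) (x : ℤ) : ℝ :=
  if x = 0 then φ 0 - φ 1
  else if x = (N : ℤ) then φ (N : ℤ) - φ ((N : ℤ) - 1)
  else 2 * φ x - φ (x + 1) - φ (x - 1)

lemma sum_Icc_eq (N : ℕ) (f : ℤ → ℝ) :
    ∑ x ∈ Finset.Icc (0 : ℤ) (N : ℤ), f x = ∑ i ∈ Finset.range (N + 1), f i := by
  rw [show Finset.Icc (0 : ℤ) (N : ℤ)
      = (Finset.range (N + 1)).map ⟨(fun n : ℕ => (n : ℤ)), fun a b h => Nat.cast_inj.mp h⟩ by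
    ext a
    simp only [Finset.mem_Icc, Finset.mem_map, Finset.mem_range, Function.Embedding.coeFn_mk]
    constructor
    · rintro ⟨h0, h1⟩; exact ⟨a.toNat, by omega, by show ((a.toNat : ℕ) : ℤ) = a; omega⟩
    · rintro ⟨n, hn, rfl⟩; show 0 ≤ (n : ℤ) ∧ (n : ℤ) ≤ N; omega]
  rw [Finset.sum_map]
  rfl

lemma sbp (N : ℕ) (hN : 2 ≤ N) (φ ψ : ℤ → ℝ) :
    ∑ i ∈ Finset.range (N + 1), Dact N φ i * ψ i
      = ∑ i ∈ Finset.range N, (φ (i + 1) - φ i) * (ψ (i + 1) - ψ i) := by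
  set a : ℕ → ℝ := fun i => if i < N then (φ i - φ (i + 1)) * ψ i else 0 with ha
  set b : ℕ → ℝ := fun i => if i = 0 then 0 else (φ i - φ (i - 1 : ℕ)) * ψ i with hb
  have key : ∀ i ∈ Finset.range (N + 1), Dact N φ i * ψ i = a i + b i := by
    intro i hi
    simp only [Finset.mem_range] at hi
    unfold Dact
    rcases Nat.eq_zero_or_pos i with h0 | h0
    · subst h0
      simp only [Nat.cast_zero, if_pos rfl, ha, hb]
      rw [if_pos (by omega : 0 < N)]
      norm_num
    · rcases eq_or_ne i N with hiN | hiN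
      · subst hiN
        rw [if_neg (by exact_mod_cast (by omega : (i : ℤ) ≠ 0)), if_pos rfl]
        simp only [ha, hb]
        rw [if_neg (lt_irrefl _), if_neg (by omega)]
        have : ((i : ℤ) - 1) = ((i - 1 : ℕ) : ℤ) := by omega
        rw [this]
        ring
      · rw [if_neg (by exact_mod_cast (by omega : (i : ℤ) ≠ 0)),
            if_neg (by exact_mod_cast (by omega : (i : ℤ) ≠ (N : ℤ)))]
        simp only [ha, hb]
        rw [if_pos (by omega), if_neg (by omega)]
        have h1 : ((i : ℤ) - 1) = ((i - 1 : ℕ) : ℤ) := by omega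
        have h2 : ((i : ℤ) + 1) = ((i + 1 : ℕ) : ℤ) := by push_cast; ring
        rw [h1, h2]
        ring
  rw [Finset.sum_congr rfl key, Finset.sum_add_distrib]
  have hA : ∑ i ∈ Finset.range (N + 1), a i
      = ∑ i ∈ Finset.range N, (φ i - φ (i + 1)) * ψ i := by
    rw [Finset.sum_range_succ, ha]
    simp only [lt_irrefl, if_neg, add_zero, if_false]
    refine Finset.sum_congr rfl fun i hi => ?_
    simp only [Finset.mem_range] at hi
    rw [if_pos hi]
  have hB : ∑ i ∈ Finset.range (N + 1), b i
      = ∑ i ∈ Finset.range N, (φ (i + 1) - φ i) * ψ (i + 1) := by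
    rw [Finset.sum_range_succ']
    have hb0 : b 0 = 0 := by simp [hb]
    rw [hb0, add_zero]
    refine Finset.sum_congr rfl fun i hi => ?_
    simp only [hb, if_neg (Nat.succ_ne_zero i), Nat.add_sub_cancel]
    push_cast
    ring
  rw [hA, hB, ← Finset.sum_add_distrib]
  refine Finset.sum_congr rfl fun i hi => ?_
  push_cast
  ring

lemma telescope_abs (φ : ℤ → ℝ) (u v : ℕ) (huv : u ≤ v) :
    |φ v - φ u| ≤ ∑ i ∈ Finset.Ico u v, |φ (i + 1) - φ i| := by
  have h : φ v - φ u = ∑ i ∈ Finset.Ico u v, (φ (i + 1) - φ (i : ℕ)) := by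
    rw [Finset.sum_Ico_eq_sub _ huv]
    have t : ∀ n : ℕ, ∑ k ∈ Finset.range n, (φ (k + 1) - φ (k : ℕ)) = φ n - φ 0 := by
      intro n
      have h2 := Finset.sum_range_sub (fun i : ℕ => φ i) n
      simp only [Nat.cast_add, Nat.cast_one, Nat.cast_zero] at h2 ⊢
      push_cast at h2
      convert h2 using 1
    rw [t, t]
    ring
  rw [h]
  exact Finset.abs_sum_le_sum_abs _ _

lemma cs_bound (s : Finset ℕ) (δ : ℕ → ℝ) :
    ∑ i ∈ s, |δ i| ≤ Real.sqrt ((s.card : ℝ) * ∑ i ∈ s, (δ i) ^ 2) := by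
  have h1 : (∑ i ∈ s, |δ i|) ^ 2 ≤ (s.card : ℝ) * ∑ i ∈ s, (δ i) ^ 2 := by
    have := Finset.sum_mul_sq_le_sq_mul_sq s (fun _ => (1 : ℝ)) (fun i => |δ i|)
    simpa [sq_abs] using this
  calc ∑ i ∈ s, |δ i| = Real.sqrt ((∑ i ∈ s, |δ i|) ^ 2) := by
        rw [Real.sqrt_sq (Finset.sum_nonneg fun i _ => abs_nonneg _)]
    _ ≤ _ := Real.sqrt_le_sqrt h1

lemma pointwise_bound (N L : ℕ) (hL : L ≤ N) (φ : ℤ → ℝ) (x : ℕ) (hx : x < N + 1) :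
    |φ x| ≤ (∑ i ∈ Finset.range (N + 1), |φ i|) / (L + 1)
      + Real.sqrt ((L : ℝ) * ∑ i ∈ Finset.range N, (φ (i + 1) - φ i) ^ 2) := by
  set A := ∑ i ∈ Finset.range (N + 1), |φ i| with hA
  set E := ∑ i ∈ Finset.range N, (φ (i + 1) - φ (i : ℕ)) ^ 2 with hE
  set a := min x (N - L) with haa
  have hsub : Finset.Icc a (a + L) ⊆ Finset.range (N + 1) := by
    intro y hy
    simp only [Finset.mem_Icc] at hy
    simp only [Finset.mem_range]
    omega
  have hxW : x ∈ Finset.Icc a (a + L) := by simp only [Finset.mem_Icc]; omega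
  have hcard : (Finset.Icc a (a + L)).card = L + 1 := by
    rw [Nat.card_Icc]; omega
  -- find small point
  obtain ⟨y, hyW, hy⟩ : ∃ y ∈ Finset.Icc a (a + L), |φ y| ≤ A / (L + 1) := by
    apply Finset.exists_le_of_sum_le ⟨x, hxW⟩
    have h1 : ∑ i ∈ Finset.Icc a (a + L), |φ i| ≤ A := by
      exact Finset.sum_le_sum_of_subset_of_nonneg hsub fun i _ _ => abs_nonneg _
    have h2 : ∑ _i ∈ Finset.Icc a (a + L), A / (L + 1 : ℝ) = A := by
      rw [Finset.sum_const, hcard, nsmul_eq_mul]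
      field_simp
      push_cast; ring
    rw [h2]; exact h1
  simp only [Finset.mem_Icc] at hyW
  -- telescoping between x and y within window
  have habs : |φ x - φ y| ≤ ∑ i ∈ Finset.Ico (min x y) (max x y), |φ (i + 1) - φ (i : ℕ)| := by
    rcases le_total y x with h | h
    · simpa [min_eq_right h, max_eq_left h, abs_sub_comm (φ (y:ℤ))] using
        telescope_abs φ y x h
    · have := telescope_abs φ x y h
      rw [min_eq_left h, max_eq_right h]
      rwa [abs_sub_comm]
  have hsub2 : Finset.Ico (min x y) (max x y) ⊆ Finset.Ico a (a + L) := by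
    intro i hi
    simp only [Finset.mem_Ico] at hi ⊢
    simp only [Finset.mem_Icc] at hxW
    omega
  have habs2 : |φ x - φ y| ≤ ∑ i ∈ Finset.Ico a (a + L), |φ (i + 1) - φ (i : ℕ)| :=
    habs.trans (Finset.sum_le_sum_of_subset_of_nonneg hsub2 fun i _ _ => abs_nonneg _)
  have hcs := cs_bound (Finset.Ico a (a + L)) (fun i => φ (i + 1) - φ (i : ℕ))
  have hcard2 : (Finset.Ico a (a + L)).card = L := by rw [Nat.card_Ico]; omega
  have hE2 : ∑ i ∈ Finset.Ico a (a + L), (φ (i + 1) - φ (i : ℕ)) ^ 2 ≤ E := by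
    apply Finset.sum_le_sum_of_subset_of_nonneg
    · intro i hi; simp only [Finset.mem_Ico] at hi; simp only [Finset.mem_range]; omega
    · exact fun i _ _ => sq_nonneg _
  have hsqrt : Real.sqrt ((L : ℝ) * ∑ i ∈ Finset.Ico a (a + L), (φ (i + 1) - φ (i : ℕ)) ^ 2)
      ≤ Real.sqrt ((L : ℝ) * E) := by
    apply Real.sqrt_le_sqrt
    exact mul_le_mul_of_nonneg_left hE2 (Nat.cast_nonneg _)
  rw [hcard2] at hcs
  calc |φ x| ≤ |φ y| + |φ x - φ y| := by
        have := abs_add_le (φ (y:ℤ)) (φ (x:ℤ) - φ (y:ℤ)); simp at this ⊢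
        calc |φ (x:ℤ)| = |φ (y:ℤ) + (φ (x:ℤ) - φ (y:ℤ))| := by ring_nf
          _ ≤ _ := abs_add_le _ _
    _ ≤ A / (L + 1) + Real.sqrt ((L : ℝ) * E) :=
        add_le_add hy ((habs2.trans hcs).trans hsqrt)
-- assume pointwise_bound proven; test the rpow arithmetic core
lemma S_bound (N : ℕ) (hN : 2 ≤ N) (A E S : ℝ) (hA : 0 < A) (hE : 0 ≤ E)
    (hkey : ∀ L : ℕ, L ≤ N → S ≤ (A / (L + 1) + Real.sqrt ((L : ℝ) * E)) * A) :
    S ≤ A ^ 2 / N + 2 * E ^ ((1 : ℝ) / 3) * A ^ ((4 : ℝ) / 3) := by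
  rcases eq_or_lt_of_le hE with hE0 | hE0
  · -- E = 0
    have h := hkey N le_rfl
    rw [← hE0] at h
    simp only [mul_zero, Real.sqrt_zero, add_zero] at h
    have h2 : (A / (N + 1)) * A ≤ A ^ 2 / N := by
      rw [div_mul_eq_mul_div, ← sq]
      apply div_le_div_of_nonneg_left (sq_nonneg A) (by positivity)
      · push_cast; linarith
    have h3 : (0 : ℝ) ≤ 2 * E ^ ((1 : ℝ) / 3) * A ^ ((4 : ℝ) / 3) := by positivity
    linarith
  · -- E > 0
    set t : ℝ := A ^ ((2 : ℝ) / 3) / E ^ ((1 : ℝ) / 3) with ht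
    have htpos : 0 < t := by positivity
    set L : ℕ := min N ⌊t⌋₊ with hL
    have hLN : L ≤ N := min_le_left _ _
    have hLt : (L : ℝ) ≤ t := by
      calc (L : ℝ) ≤ (⌊t⌋₊ : ℝ) := by exact_mod_cast min_le_right N ⌊t⌋₊
        _ ≤ t := Nat.floor_le htpos.le
    have hr : A ^ ((1 : ℝ) / 3) * E ^ ((1 : ℝ) / 3) = A / t := by
      have hone : A ^ ((1:ℝ)/3) * A ^ ((2:ℝ)/3) = A := by
        rw [← Real.rpow_add hA, show (1:ℝ)/3 + 2/3 = 1 by norm_num, Real.rpow_one]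
      rw [ht, div_div_eq_mul_div, eq_div_iff (by positivity : A ^ ((2:ℝ)/3) ≠ 0),
        mul_right_comm, hone]
    have key2 : A / (L + 1) ≤ A / (N + 1) + A ^ ((1 : ℝ) / 3) * E ^ ((1 : ℝ) / 3) := by
      rcases le_or_gt ⌊t⌋₊ N with hc | hc
      · have hLe : L = ⌊t⌋₊ := min_eq_right hc
        have htlt : t < (L : ℝ) + 1 := by rw [hLe]; exact_mod_cast Nat.lt_floor_add_one t
        have : A / ((L : ℝ) + 1) ≤ A / t :=
          div_le_div_of_nonneg_left hA.le htpos htlt.le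
        rw [← hr] at this
        have h0 : (0 : ℝ) ≤ A / (N + 1) := by positivity
        linarith
      · have hLe : L = N := min_eq_left hc.le
        rw [hLe]
        have h0 : (0 : ℝ) ≤ A ^ ((1 : ℝ) / 3) * E ^ ((1 : ℝ) / 3) := by positivity
        linarith
    have key3 : Real.sqrt ((L : ℝ) * E) ≤ A ^ ((1 : ℝ) / 3) * E ^ ((1 : ℝ) / 3) := by
      have h1 : (L : ℝ) * E ≤ t * E := mul_le_mul_of_nonneg_right hLt hE
      have h2 : t * E = A ^ ((2 : ℝ) / 3) * E ^ ((2 : ℝ) / 3) := by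
        rw [ht, div_mul_eq_mul_div, mul_div_assoc]
        congr 1
        rw [div_eq_iff (by positivity : (E:ℝ) ^ ((1:ℝ)/3) ≠ 0), ← Real.rpow_add hE0,
          show (2:ℝ)/3 + 1/3 = 1 by norm_num, Real.rpow_one]
      calc Real.sqrt ((L : ℝ) * E) ≤ Real.sqrt (t * E) := Real.sqrt_le_sqrt h1
        _ = A ^ ((1 : ℝ) / 3) * E ^ ((1 : ℝ) / 3) := by
            rw [h2, Real.sqrt_eq_rpow, Real.mul_rpow (by positivity) (by positivity),
              ← Real.rpow_mul hA.le, ← Real.rpow_mul hE]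
            norm_num
    have h := hkey L hLN
    have hfin : (A / (L + 1) + Real.sqrt ((L : ℝ) * E)) * A
        ≤ (A / (N + 1) + 2 * (A ^ ((1 : ℝ) / 3) * E ^ ((1 : ℝ) / 3))) * A := by
      apply mul_le_mul_of_nonneg_right _ hA.le
      linarith
    have hA2 : (A / (N + 1) + 2 * (A ^ ((1 : ℝ) / 3) * E ^ ((1 : ℝ) / 3))) * A
        ≤ A ^ 2 / N + 2 * E ^ ((1 : ℝ) / 3) * A ^ ((4 : ℝ) / 3) := by
      have e1 : (A / (N + 1)) * A ≤ A ^ 2 / N := by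
        rw [div_mul_eq_mul_div, ← sq]
        apply div_le_div_of_nonneg_left (sq_nonneg A) (by positivity)
        · push_cast; linarith [hN]
      have e2 : A ^ ((1 : ℝ) / 3) * A = A ^ ((4 : ℝ) / 3) := by
        nth_rewrite 2 [← Real.rpow_one A]
        rw [← Real.rpow_add hA]
        norm_num
      have : (2 * (A ^ ((1 : ℝ) / 3) * E ^ ((1 : ℝ) / 3))) * A
          = 2 * E ^ ((1 : ℝ) / 3) * A ^ ((4 : ℝ) / 3) := by
        rw [← e2]; ring
      rw [add_mul, this]
      linarith
    linarith


/-- `D` is self-adjoint for the counting measure on `I`, positive semidefinite, and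
the Nash-type inequality
`(Σ φ²)^{1/2} ≤ C·[N^{−1/2}·Σ|φ| + ⟨φ, Dφ⟩^{1/6}·(Σ|φ|)^{2/3}]`
holds with a universal constant `C` (here `⟨φ, Dφ⟩ = Σ_{x∈I}|(D^{1/2}φ)_x|²` is the
quadratic form of `D`). -/
theorem neumann_laplacian_nash_inequality :
    (∀ N : ℕ, 2 ≤ N → ∀ φ ψ : ℤ → ℝ,
        ∑ x ∈ Finset.Icc (0 : ℤ) (N : ℤ), Dact N φ x * ψ x =
          ∑ x ∈ Finset.Icc (0 : ℤ) (N : ℤ), φ x * Dact N ψ x) ∧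
    (∀ N : ℕ, 2 ≤ N → ∀ φ : ℤ → ℝ,
        0 ≤ ∑ x ∈ Finset.Icc (0 : ℤ) (N : ℤ), φ x * Dact N φ x) ∧
    (∃ C : ℝ, 0 < C ∧ ∀ N : ℕ, 2 ≤ N → ∀ φ : ℤ → ℝ,
        (∑ x ∈ Finset.Icc (0 : ℤ) (N : ℤ), (φ x) ^ 2) ^ ((1 : ℝ) / 2) ≤
          C * ((N : ℝ) ^ (-(1 / 2 : ℝ)) * ∑ x ∈ Finset.Icc (0 : ℤ) (N : ℤ), |φ x| +
            (∑ x ∈ Finset.Icc (0 : ℤ) (N : ℤ), φ x * Dact N φ x) ^ ((1 : ℝ) / 6) *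
              (∑ x ∈ Finset.Icc (0 : ℤ) (N : ℤ), |φ x|) ^ ((2 : ℝ) / 3))) := by
  have hquad : ∀ N : ℕ, 2 ≤ N → ∀ φ : ℤ → ℝ,
      ∑ x ∈ Finset.Icc (0 : ℤ) (N : ℤ), φ x * Dact N φ x
        = ∑ i ∈ Finset.range N, (φ (i + 1) - φ (i : ℕ)) ^ 2 := by
    intro N hN φ
    rw [sum_Icc_eq]
    rw [show (∑ i ∈ Finset.range (N + 1), φ i * Dact N φ i)
        = ∑ i ∈ Finset.range (N + 1), Dact N φ i * φ i from
      Finset.sum_congr rfl fun i _ => mul_comm _ _]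
    rw [sbp N hN φ φ]
    exact Finset.sum_congr rfl fun i _ => (sq _).symm
  refine ⟨?_, ?_, ?_⟩
  · intro N hN φ ψ
    rw [sum_Icc_eq, sum_Icc_eq, sbp N hN φ ψ]
    rw [show (∑ i ∈ Finset.range (N + 1), φ i * Dact N ψ i)
        = ∑ i ∈ Finset.range (N + 1), Dact N ψ i * φ i from
      Finset.sum_congr rfl fun i _ => mul_comm _ _]
    rw [sbp N hN ψ φ]
    exact Finset.sum_congr rfl fun i _ => by ring
  · intro N hN φ
    rw [hquad N hN φ]
    exact Finset.sum_nonneg fun i _ => sq_nonneg _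
  · refine ⟨2, by norm_num, ?_⟩
    intro N hN φ
    rw [hquad N hN φ, sum_Icc_eq, sum_Icc_eq]
    set A := ∑ i ∈ Finset.range (N + 1), |φ (i : ℕ)| with hAdef
    set E := ∑ i ∈ Finset.range N, (φ (i + 1) - φ (i : ℕ)) ^ 2 with hEdef
    set S := ∑ i ∈ Finset.range (N + 1), (φ (i : ℕ)) ^ 2 with hSdef
    have hA0 : 0 ≤ A := Finset.sum_nonneg fun i _ => abs_nonneg _
    have hE0 : 0 ≤ E := Finset.sum_nonneg fun i _ => sq_nonneg _
    rcases eq_or_lt_of_le hA0 with hA | hA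
    · -- A = 0, so φ vanishes on I
      have hz : ∀ i ∈ Finset.range (N + 1), |φ (i : ℕ)| = 0 := by
        intro i hi
        exact (Finset.sum_eq_zero_iff_of_nonneg fun j _ => abs_nonneg _).mp hA.symm i hi
      have hS : S = 0 := Finset.sum_eq_zero fun i hi => by
        have := hz i hi; rw [abs_eq_zero] at this; rw [this]; ring
      rw [hS, ← hA, Real.zero_rpow (by norm_num : (1:ℝ)/2 ≠ 0),
        Real.zero_rpow (by norm_num : (2:ℝ)/3 ≠ 0)]
      simp
    · -- A > 0
      have hkey : ∀ L : ℕ, L ≤ N → S ≤ (A / (L + 1) + Real.sqrt ((L : ℝ) * E)) * A := by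
        intro L hL
        have hpt : ∀ i ∈ Finset.range (N + 1),
            (φ (i : ℕ)) ^ 2 ≤ (A / (L + 1) + Real.sqrt ((L : ℝ) * E)) * |φ (i : ℕ)| := by
          intro i hi
          simp only [Finset.mem_range] at hi
          have h1 := pointwise_bound N L hL φ i hi
          calc (φ (i : ℕ)) ^ 2 = |φ (i : ℕ)| * |φ (i : ℕ)| := by rw [sq, ← abs_mul_abs_self]
            _ ≤ (A / (L + 1) + Real.sqrt ((L : ℝ) * E)) * |φ (i : ℕ)| :=
              mul_le_mul_of_nonneg_right h1 (abs_nonneg _)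
        calc S ≤ ∑ i ∈ Finset.range (N + 1),
              (A / (L + 1) + Real.sqrt ((L : ℝ) * E)) * |φ (i : ℕ)| :=
            Finset.sum_le_sum hpt
          _ = (A / (L + 1) + Real.sqrt ((L : ℝ) * E)) * A := by
            rw [← Finset.mul_sum]
      have hSb := S_bound N hN A E S hA hE0 hkey
      set u : ℝ := (N : ℝ) ^ (-(1 / 2 : ℝ)) * A with hu
      set v : ℝ := E ^ ((1 : ℝ) / 6) * A ^ ((2 : ℝ) / 3) with hv
      have hNpos : (0 : ℝ) < N := by exact_mod_cast (by omega : 0 < N)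
      have hu0 : 0 ≤ u := by positivity
      have hv0 : 0 ≤ v := by positivity
      have hu2 : u ^ 2 = A ^ 2 / N := by
        rw [hu, mul_pow, ← Real.rpow_natCast ((N:ℝ) ^ (-(1/2:ℝ))) 2,
          ← Real.rpow_mul hNpos.le]
        norm_num
        rw [Real.rpow_neg_one]
        ring
      have hv2 : v ^ 2 = E ^ ((1 : ℝ) / 3) * A ^ ((4 : ℝ) / 3) := by
        rw [hv, mul_pow, ← Real.rpow_natCast (E ^ ((1:ℝ)/6)) 2,
          ← Real.rpow_natCast (A ^ ((2:ℝ)/3)) 2, ← Real.rpow_mul hE0,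
          ← Real.rpow_mul hA0]
        norm_num
      have hS2 : S ≤ (2 * (u + v)) ^ 2 := by
        have h1 : S ≤ u ^ 2 + 2 * v ^ 2 := by rw [hu2, hv2]; linarith
        nlinarith [mul_nonneg hu0 hv0, sq_nonneg u, sq_nonneg v]
      rw [← Real.sqrt_eq_rpow]
      calc Real.sqrt S ≤ Real.sqrt ((2 * (u + v)) ^ 2) := Real.sqrt_le_sqrt hS2
        _ = 2 * (u + v) := Real.sqrt_sq (by positivity)
        _ = 2 * (u + v) := rfl
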